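/- Let X and Y be bounded linear operators on a complex Hilbert space H. Then w(X + Y) ≤ 2 w(S), where S is the operator on H ⊕ H given by the 2×2 operator matrix with zero diagonal entries, (1,2)-entry X, and (2,1)-entry Y, and w denotes the numerical radius. -/

import Mathlib

/-- The numerical radius of a bounded linear operator. -/
noncomputable def numRadius {E : Type*} [NormedAddCommGroup E] [InnerProductSpace ℂ E]
    (T : E →L[ℂ] E) : ℝ :=
  ⨆ x : {x : E // ‖x‖ = 1}, ‖(inner ℂ (T x.val) x.val : ℂ)‖

/-- The 2×2 operator matrix `[[0, C],[D, 0]]` acting on `H ⊕ H` by `(x, y) ↦ (C y, D x)`. -/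
noncomputable def offDiagOp {H : Type*} [NormedAddCommGroup H] [InnerProductSpace ℂ H]
    (C D : H →L[ℂ] H) : WithLp 2 (H × H) →L[ℂ] WithLp 2 (H × H) :=
  ((WithLp.prodContinuousLinearEquiv 2 ℂ H H).symm : (H × H) →L[ℂ] WithLp 2 (H × H)) ∘L
    ((C ∘L ContinuousLinearMap.snd ℂ H H).prod (D ∘L ContinuousLinearMap.fst ℂ H H)) ∘L
    ((WithLp.prodContinuousLinearEquiv 2 ℂ H H) : WithLp 2 (H × H) →L[ℂ] (H × H))

lemma numRadius_bdd {E : Type*} [NormedAddCommGroup E] [InnerProductSpace ℂ E]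
    (T : E →L[ℂ] E) : BddAbove (Set.range fun x : {x : E // ‖x‖ = 1} =>
      ‖(inner ℂ (T x.val) x.val : ℂ)‖) := by
  refine ⟨‖T‖, ?_⟩
  rintro r ⟨⟨x, hx⟩, rfl⟩
  calc ‖(inner ℂ (T x) x : ℂ)‖ ≤ ‖T x‖ * ‖x‖ := norm_inner_le_norm _ _
    _ ≤ ‖T‖ * ‖x‖ * ‖x‖ := by gcongr; exact T.le_opNorm x
    _ = ‖T‖ := by rw [hx]; ring

lemma numRadius_nonneg {E : Type*} [NormedAddCommGroup E] [InnerProductSpace ℂ E]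
    (T : E →L[ℂ] E) : 0 ≤ numRadius T :=
  Real.iSup_nonneg fun _ => norm_nonneg _

theorem stmt_13 {H : Type*} [NormedAddCommGroup H] [InnerProductSpace ℂ H] [CompleteSpace H]
    (X Y : H →L[ℂ] H) :
    numRadius (X + Y) ≤ 2 * numRadius (offDiagOp X Y) := by
  apply Real.iSup_le _ (by have := numRadius_nonneg (offDiagOp X Y); linarith)
  rintro ⟨x, hx⟩
  set a : ℂ := (((Real.sqrt 2)⁻¹ : ℝ) : ℂ)
  set u : WithLp 2 (H × H) := (WithLp.equiv 2 (H × H)).symm (a • x, a • x) with hu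
  have ha : ‖a‖ = (Real.sqrt 2)⁻¹ := by
    simp [a, abs_of_nonneg (inv_nonneg.2 (Real.sqrt_nonneg 2))]
  have h2 : (Real.sqrt 2 : ℝ) ^ 2 = 2 := Real.sq_sqrt (by norm_num)
  have hunorm : ‖u‖ = 1 := by
    have : ‖u‖ ^ 2 = 1 := by
      rw [WithLp.prod_norm_sq_eq_of_L2]
      have : u.fst = a • x ∧ u.snd = a • x := ⟨rfl, rfl⟩
      rw [this.1, this.2, norm_smul, hx, ha, mul_one, inv_pow, h2]
      norm_num
    nlinarith [norm_nonneg u]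
  have hfst : (offDiagOp X Y u).fst = a • X x := by
    simp [offDiagOp, u, map_smul]
  have hsnd : (offDiagOp X Y u).snd = a • Y x := by
    simp [offDiagOp, u, map_smul]
  have hinner : (inner ℂ (offDiagOp X Y u) u : ℂ) =
      (2 : ℂ)⁻¹ * inner ℂ ((X + Y) x) x := by
    rw [WithLp.prod_inner_apply, WithLp.ofLp_fst, WithLp.ofLp_snd, WithLp.ofLp_fst, WithLp.ofLp_snd, hfst, hsnd]
    have hu1 : u.fst = a • x := rfl
    have hu2 : u.snd = a • x := rfl
    rw [hu1, hu2, inner_smul_left, inner_smul_left, inner_smul_right, inner_smul_right]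
    have hconj : (starRingEnd ℂ) a = a := by simp [a]
    rw [hconj]
    have haa : a * a = (2 : ℂ)⁻¹ := by
      have : (Real.sqrt 2 : ℂ) * (Real.sqrt 2 : ℂ) = 2 := by
        norm_cast; rw [← sq, h2]
      field_simp [a]
      norm_cast
      rw [show a ^ 2 = (((Real.sqrt 2 ^ 2)⁻¹ : ℝ) : ℂ) by simp only [a]; push_cast; ring, h2]; norm_num
    rw [ContinuousLinearMap.add_apply, inner_add_left]
    ring_nf
    rw [sq, haa]
    ring
  have hle : ‖(inner ℂ (offDiagOp X Y u) u : ℂ)‖ ≤ numRadius (offDiagOp X Y) :=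
    le_ciSup (numRadius_bdd _) (⟨u, hunorm⟩ : {v : WithLp 2 (H × H) // ‖v‖ = 1})
  calc ‖(inner ℂ ((X + Y) x) x : ℂ)‖
      = 2 * ‖(inner ℂ (offDiagOp X Y u) u : ℂ)‖ := by
        rw [hinner]; simp [norm_mul]
    _ ≤ 2 * numRadius (offDiagOp X Y) := by linarith
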